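/- arXiv:2602.06581 — 2 statements merged into one kernel-verified Lean document; each statement's English description precedes it below -/
import Mathlib

section
/- For s ∈ (0,1) and n ≥ 1, the function z ↦ (1 − cos z₁)/|z|^{n+2s} · |ln |z|| is integrable on ℝⁿ, where z₁ denotes the first coordinate of z. -/
open MeasureTheory Measure Set Metric Real

-- radial integrability criterion
lemma radial_integrable {E : Type*} [NormedAddCommGroup E] [NormedSpace ℝ E]
    [MeasurableSpace E] [BorelSpace E] [FiniteDimensional ℝ E] [Nontrivial E]
    (μ : Measure E) [μ.IsAddHaarMeasure] {f : ℝ → ℝ} (hm : Measurable f)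
    (hf : IntegrableOn (fun r => r ^ (Module.finrank ℝ E - 1) * f r) (Ioi (0:ℝ))) :
    Integrable (fun x : E => f ‖x‖) μ := by
  set k := Module.finrank ℝ E - 1 with hk
  -- integrability over volumeIoiPow
  have h1 : Integrable (fun y : Ioi (0:ℝ) => f y.1) (Measure.volumeIoiPow k) := by
    rw [Measure.volumeIoiPow, integrable_withDensity_iff
      (by measurability) (Filter.Eventually.of_forall fun y => ENNReal.ofReal_lt_top)]
    have hmap : (volume : Measure ℝ).restrict (Ioi 0)
        = Measure.map Subtype.val (Measure.comap Subtype.val volume) :=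
      (map_comap_subtype_coe measurableSet_Ioi _).symm
    have := (MeasurableEmbedding.subtype_coe (measurableSet_Ioi (a := (0:ℝ)))).integrable_map_iff (μ := Measure.comap Subtype.val volume)
      (g := fun r : ℝ => r ^ k * f r)
    rw [← hmap] at this
    have h2 : Integrable ((fun r : ℝ => r ^ k * f r) ∘ Subtype.val)
        (Measure.comap Subtype.val volume) := this.mp hf
    apply h2.congr
    filter_upwards with y
    have : (0:ℝ) < y.1 := y.2
    simp [Function.comp, ENNReal.toReal_ofReal (pow_nonneg this.le k), mul_comm]
  -- integrability over the product
  have h2 : Integrable (fun p : sphere (0:E) 1 × Ioi (0:ℝ) => f p.2.1)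
      (μ.toSphere.prod (Measure.volumeIoiPow k)) := by
    have := Integrable.mul_prod (L := ℝ) (integrable_const (μ := μ.toSphere) (1:ℝ)) h1
    simpa using this
  have h3 := (μ.measurePreserving_homeomorphUnitSphereProd).integrable_comp_emb
      (Homeomorph.measurableEmbedding _) (g := fun p : sphere (0:E) 1 × Ioi (0:ℝ) => f p.2.1)
  have h4 : Integrable (fun x : ({0}ᶜ : Set E) => f ‖x.1‖) (μ.comap Subtype.val) := by
    have := h3.mpr h2
    apply this.congr
    filter_upwards with x
    simp [Function.comp]
  -- transfer back
  have hmap : μ.restrict ({(0:E)}ᶜ) = Measure.map Subtype.val (μ.comap Subtype.val) :=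
    (map_comap_subtype_coe (measurableSet_singleton (0:E)).compl _).symm
  have h5 : IntegrableOn (fun x : E => f ‖x‖) ({(0:E)}ᶜ) μ := by
    rw [IntegrableOn, hmap,
      (MeasurableEmbedding.subtype_coe (measurableSet_singleton (0:E)).compl).integrable_map_iff]
    exact h4
  rwa [IntegrableOn, restrict_compl_singleton] at h5



lemma abs_log_le_aux {x ε : ℝ} (hx : 0 < x) (hε : 0 < ε) :
    |Real.log x| ≤ (x ^ ε + x ^ (-ε)) / ε := by
  have key : ∀ y : ℝ, 1 ≤ y → Real.log y ≤ y ^ ε / ε := by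
    intro y hy
    have hy0 : 0 < y := lt_of_lt_of_le one_pos hy
    rw [le_div_iff₀ hε, mul_comm, ← Real.log_rpow hy0]
    calc Real.log (y ^ ε) ≤ y ^ ε - 1 := Real.log_le_sub_one_of_pos (rpow_pos_of_pos hy0 ε)
      _ ≤ y ^ ε := by linarith
  have h1 : (0:ℝ) < x ^ ε := rpow_pos_of_pos hx _
  have h2 : (0:ℝ) < x ^ (-ε) := rpow_pos_of_pos hx _
  rcases le_total 1 x with h | h
  · rw [abs_of_nonneg (Real.log_nonneg h)]
    calc Real.log x ≤ x ^ ε / ε := key x h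
      _ ≤ (x ^ ε + x ^ (-ε)) / ε := (div_le_div_iff_of_pos_right hε).mpr (by linarith)
  · rw [abs_of_nonpos (Real.log_nonpos hx.le h), ← Real.log_inv]
    have hx1 : 1 ≤ x⁻¹ := by rwa [le_inv_comm₀ one_pos hx, inv_one]
    calc Real.log x⁻¹ ≤ (x⁻¹) ^ ε / ε := key _ hx1
      _ = x ^ (-ε) / ε := by rw [← Real.rpow_neg_one x, ← Real.rpow_mul hx.le]; norm_num
      _ ≤ (x ^ ε + x ^ (-ε)) / ε := (div_le_div_iff_of_pos_right hε).mpr (by linarith)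

lemma coord_abs_le_norm {n : ℕ} (z : EuclideanSpace ℝ (Fin n)) (i : Fin n) :
    |z i| ≤ ‖z‖ := by
  rw [EuclideanSpace.norm_eq, ← Real.sqrt_sq_eq_abs]
  apply Real.sqrt_le_sqrt
  have := Finset.single_le_sum (f := fun j => ‖z j‖ ^ 2)
    (fun j _ => sq_nonneg _) (Finset.mem_univ i)
  simpa [Real.norm_eq_abs, sq_abs] using this

theorem stmt_8 (n : ℕ) (hn : 0 < n) (s : ℝ) (hs : s ∈ Set.Ioo (0:ℝ) 1) :
    Integrable
      (fun z : EuclideanSpace ℝ (Fin n) =>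
        (1 - Real.cos (z ⟨0, hn⟩)) / ‖z‖ ^ ((n:ℝ) + 2*s) * |Real.log ‖z‖|) := by
  haveI : Nontrivial (EuclideanSpace ℝ (Fin n)) := by
    refine nontrivial_of_ne (EuclideanSpace.single ⟨0, hn⟩ (1:ℝ)) 0 ?_
    intro h
    simpa using congrArg (fun v : EuclideanSpace ℝ (Fin n) => v ⟨0, hn⟩) h
  obtain ⟨hs0, hs1⟩ := hs
  set ε : ℝ := min s (1-s) with hεdef
  have hε0 : 0 < ε := lt_min hs0 (by linarith)
  have hεs : ε ≤ s := min_le_left _ _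
  have hεs' : ε ≤ 1 - s := min_le_right _ _
  set p : ℝ := (n:ℝ) + 2*s with hpdef
  have hn1 : (1:ℝ) ≤ n := by exact_mod_cast hn
  have hp0 : 0 < p := by rw [hpdef]; linarith
  set f : ℝ → ℝ := fun r => min 2 (r ^ (2:ℝ)) * r ^ (-p) * ((r ^ ε + r ^ (-ε))/ε) with hfdef
  have hfm : Measurable f := by fun_prop
  have hint : IntegrableOn
      (fun r => r ^ (Module.finrank ℝ (EuclideanSpace ℝ (Fin n)) - 1) * f r) (Ioi (0:ℝ)) := by
    rw [finrank_euclideanSpace_fin]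
    rw [← Ioc_union_Ioi_eq_Ioi (zero_le_one (α := ℝ))]
    have hmeas : AEStronglyMeasurable (fun r : ℝ => r ^ (n-1) * f r) :=
      ((measurable_id.pow_const _).mul hfm).aestronglyMeasurable
    apply IntegrableOn.union
    · -- near 0
      apply Integrable.mono' (g := fun r => (2/ε) * r ^ (1 - 2*s - ε))
        (((intervalIntegrable_iff_integrableOn_Ioc_of_le zero_le_one).mp
          (intervalIntegral.intervalIntegrable_rpow' (by linarith))).const_mul _)
        hmeas.restrict
      filter_upwards [ae_restrict_mem measurableSet_Ioc] with r hr
      obtain ⟨hr0, hr1⟩ := hr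
      have hmul : ∀ a b : ℝ, r ^ a * r ^ b = r ^ (a+b) := fun a b => (Real.rpow_add hr0 a b).symm
      have e1 : min 2 (r ^ (2:ℝ)) ≤ r ^ (2:ℝ) := min_le_right _ _
      have e2 : r ^ ε ≤ r ^ (-ε) :=
        Real.rpow_le_rpow_of_exponent_ge hr0 hr1 (by linarith)
      have hfr0 : 0 ≤ f r := by
        apply mul_nonneg (mul_nonneg (le_min (by norm_num) (rpow_nonneg hr0.le _))
          (rpow_nonneg hr0.le _))
        exact div_nonneg (add_nonneg (rpow_nonneg hr0.le _) (rpow_nonneg hr0.le _)) hε0.le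
      have hexp : r ^ (1 - 2*s - ε) = r ^ ((n:ℝ)-1) * r ^ (2:ℝ) * r ^ (-p) * r ^ (-ε) := by
        rw [hmul, hmul, hmul]
        congr 1
        rw [hpdef]; ring
      calc ‖r ^ (n-1) * f r‖ = r ^ (n-1) * f r := by
            rw [Real.norm_eq_abs, abs_of_nonneg (mul_nonneg (pow_nonneg hr0.le _) hfr0)]
        _ ≤ r ^ ((n:ℝ)-1) * (r ^ (2:ℝ) * r ^ (-p) * ((2 * r ^ (-ε))/ε)) := by
            rw [← Real.rpow_natCast r (n-1), Nat.cast_sub hn, Nat.cast_one]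
            apply mul_le_mul_of_nonneg_left ?_ (rpow_nonneg hr0.le _)
            apply mul_le_mul
              (mul_le_mul_of_nonneg_right e1 (rpow_nonneg hr0.le _))
              ((div_le_div_iff_of_pos_right hε0).mpr (by linarith))
              (div_nonneg (add_nonneg (rpow_nonneg hr0.le _) (rpow_nonneg hr0.le _)) hε0.le)
              (mul_nonneg (rpow_nonneg hr0.le _) (rpow_nonneg hr0.le _))
        _ = (2/ε) * r ^ (1 - 2*s - ε) := by rw [hexp]; ring
    · -- at infinity
      apply Integrable.mono' (g := fun r => (4/ε) * r ^ (-1 - 2*s + ε))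
        ((integrableOn_Ioi_rpow_of_lt (by linarith) one_pos).const_mul _)
        hmeas.restrict
      filter_upwards [ae_restrict_mem measurableSet_Ioi] with r hr
      have hr1 : (1:ℝ) ≤ r := le_of_lt hr
      have hr0 : (0:ℝ) < r := lt_of_lt_of_le one_pos hr1
      have hmul : ∀ a b : ℝ, r ^ a * r ^ b = r ^ (a+b) := fun a b => (Real.rpow_add hr0 a b).symm
      have e1 : min 2 (r ^ (2:ℝ)) ≤ 2 := min_le_left _ _
      have e2 : r ^ (-ε) ≤ r ^ ε :=
        Real.rpow_le_rpow_of_exponent_le hr1 (by linarith)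
      have hfr0 : 0 ≤ f r := by
        apply mul_nonneg (mul_nonneg (le_min (by norm_num) (rpow_nonneg hr0.le _))
          (rpow_nonneg hr0.le _))
        exact div_nonneg (add_nonneg (rpow_nonneg hr0.le _) (rpow_nonneg hr0.le _)) hε0.le
      have hexp : r ^ (-1 - 2*s + ε) = r ^ ((n:ℝ)-1) * r ^ (-p) * r ^ ε := by
        rw [hmul, hmul]
        congr 1
        rw [hpdef]; ring
      calc ‖r ^ (n-1) * f r‖ = r ^ (n-1) * f r := by
            rw [Real.norm_eq_abs, abs_of_nonneg (mul_nonneg (pow_nonneg hr0.le _) hfr0)]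
        _ ≤ r ^ ((n:ℝ)-1) * (2 * r ^ (-p) * ((2 * r ^ ε)/ε)) := by
            rw [← Real.rpow_natCast r (n-1), Nat.cast_sub hn, Nat.cast_one]
            apply mul_le_mul_of_nonneg_left ?_ (rpow_nonneg hr0.le _)
            apply mul_le_mul
              (mul_le_mul_of_nonneg_right e1 (rpow_nonneg hr0.le _))
              ((div_le_div_iff_of_pos_right hε0).mpr (by linarith))
              (div_nonneg (add_nonneg (rpow_nonneg hr0.le _) (rpow_nonneg hr0.le _)) hε0.le)
              (by positivity)
        _ = (4/ε) * r ^ (-1 - 2*s + ε) := by rw [hexp]; ring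
  have hrad := radial_integrable volume hfm hint
  have hFm : AEStronglyMeasurable
      (fun z : EuclideanSpace ℝ (Fin n) =>
        (1 - Real.cos (z ⟨0, hn⟩)) / ‖z‖ ^ ((n:ℝ) + 2*s) * |Real.log ‖z‖|) volume := by
    have h1 : Continuous (fun z : EuclideanSpace ℝ (Fin n) => z ⟨0, hn⟩) :=
      (EuclideanSpace.proj (⟨0, hn⟩ : Fin n)).continuous
    apply Measurable.aestronglyMeasurable
    have m2 : Measurable fun z : EuclideanSpace ℝ (Fin n) => ‖z‖ ^ ((n:ℝ) + 2*s) :=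
      ((by fun_prop : Measurable fun r : ℝ => r ^ ((n:ℝ) + 2*s))).comp measurable_norm
    exact (((continuous_const.sub (Real.continuous_cos.comp h1)).measurable).div m2).mul
      ((Real.measurable_log.comp measurable_norm).abs)
  apply hrad.mono' hFm
  filter_upwards with z
  rcases eq_or_ne z 0 with rfl | hz
  · have h0 : ((0 : EuclideanSpace ℝ (Fin n)) ⟨0, hn⟩) = 0 := rfl
    simp only [h0, Real.cos_zero, _root_.sub_self, norm_zero, zero_div, zero_mul, norm_zero,
      Real.zero_rpow (by norm_num : (2:ℝ) ≠ 0), hfdef]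
    simp [min_eq_right (by norm_num : (0:ℝ) ≤ 2)]
  · have hr0 : 0 < ‖z‖ := norm_pos_iff.mpr hz
    set r := ‖z‖
    set t := z ⟨0, hn⟩ with htdef
    have hc1 : 0 ≤ 1 - Real.cos t := by linarith [Real.cos_le_one t]
    have hF0 : 0 ≤ (1 - Real.cos t) / r ^ p * |Real.log r| :=
      mul_nonneg (div_nonneg hc1 (rpow_nonneg hr0.le _)) (abs_nonneg _)
    rw [Real.norm_eq_abs, abs_of_nonneg hF0]
    have h1 : 1 - Real.cos t ≤ min 2 (r ^ (2:ℝ)) := by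
      apply le_min (by linarith [Real.neg_one_le_cos t])
      have ht2 : t^2 ≤ r^2 := by
        rw [← sq_abs t]
        exact pow_le_pow_left₀ (abs_nonneg t) (coord_abs_le_norm z _) 2
      calc 1 - Real.cos t ≤ t^2/2 := by linarith [Real.one_sub_sq_div_two_le_cos (x := t)]
        _ ≤ t^2 := by linarith [sq_nonneg t]
        _ ≤ r^2 := ht2
        _ = r ^ (2:ℝ) := by rw [← Real.rpow_natCast r 2]; norm_num
    have h2 : |Real.log r| ≤ (r ^ ε + r ^ (-ε))/ε := abs_log_le_aux hr0 hε0
    have key : (1 - Real.cos t) / r ^ p * |Real.log r| ≤ f r := by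
      rw [div_eq_mul_inv, ← Real.rpow_neg hr0.le, hfdef]
      apply mul_le_mul
        (mul_le_mul_of_nonneg_right h1 (rpow_nonneg hr0.le _)) h2 (abs_nonneg _)
      exact mul_nonneg (le_min (by norm_num) (rpow_nonneg hr0.le _)) (rpow_nonneg hr0.le _)
    exact key
end

section
/- For s ∈ (0,1) and n > 2s, as Λ → ∞ one has ∫_{ℝⁿ} (|ξ|^{2s} ln|ξ|² − Λ)₋ dξ = (2|𝕊^{n-1}|/(n(n+2s))) (sΛ)^{1+n/(2s)} (ln Λ)^{-n/(2s)} (1 + o(1)), where (a)₋ = max(−a, 0). -/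
open MeasureTheory

/-- The surface measure `|𝕊^{n-1}|` of the unit sphere in `ℝⁿ`,
expressed as `n` times the volume of the unit ball. -/
noncomputable def sphereArea (n : ℕ) : ℝ :=
  (n : ℝ) * (volume (Metric.ball (0 : EuclideanSpace ℝ (Fin n)) 1)).toReal

open Filter Set Real

noncomputable def Gfun (s Λ t : ℝ) : ℝ :=
  max (1 - t ^ (2*s) * ((Real.log (s*Λ) - Real.log (Real.log Λ) + 2*s*Real.log t) / Real.log Λ)) 0

lemma aux_Ival (n : ℕ) (hn : 0 < n) (s : ℝ) (hs0 : 0 < s) :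
    ∫ t in Set.Ioi (0:ℝ), (t:ℝ)^(n-1) * max (1 - t ^ (2*s)) 0
      = 2*s/(n*((n:ℝ)+2*s)) := by
  have h2s : (0:ℝ) < 2*s := by linarith
  have hsplit : Set.Ioi (0:ℝ) = Set.Ioc 0 1 ∪ Set.Ioi 1 := by
    rw [Set.Ioc_union_Ioi_eq_Ioi]; norm_num
  have hint1 : IntegrableOn (fun t : ℝ => t^(n-1) * max (1 - t ^ (2*s)) 0) (Set.Ioc 0 1) := by
    apply Measure.integrableOn_of_bounded (M := 1)
    · simp
    · apply Measurable.aestronglyMeasurable; measurability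
    · refine (ae_restrict_iff' measurableSet_Ioc).2 (.of_forall fun t ht => ?_)
      obtain ⟨ht0, ht1⟩ := ht
      have h1 : |t ^ (n-1)| ≤ 1 := by
        rw [abs_of_nonneg (pow_nonneg ht0.le _)]
        exact pow_le_one₀ ht0.le ht1
      have h2 : |max (1 - t ^ (2*s)) 0| ≤ 1 := by
        rw [abs_of_nonneg (le_max_right _ _)]
        have : (0:ℝ) ≤ t ^ (2*s) := Real.rpow_nonneg ht0.le _
        simp only [max_le_iff]; constructor <;> linarith
      calc ‖t^(n-1) * max (1 - t ^ (2*s)) 0‖ = |t^(n-1)| * |max (1 - t ^ (2*s)) 0| := abs_mul _ _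
        _ ≤ 1 * 1 := mul_le_mul h1 h2 (abs_nonneg _) zero_le_one
        _ = 1 := by ring
  have hzero : ∀ t ∈ Set.Ioi (1:ℝ), t^(n-1) * max (1 - t ^ (2*s)) 0 = 0 := by
    intro t ht
    have : (1:ℝ) ≤ t ^ (2*s) := Real.one_le_rpow (le_of_lt ht) h2s.le
    have : max (1 - t ^ (2*s)) 0 = 0 := max_eq_right (by linarith)
    rw [this, mul_zero]
  have hint2 : IntegrableOn (fun t : ℝ => t^(n-1) * max (1 - t ^ (2*s)) 0) (Set.Ioi 1) := by
    apply (integrableOn_congr_fun hzero measurableSet_Ioi).2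
    exact integrableOn_zero
  rw [hsplit, setIntegral_union (Set.Ioc_disjoint_Ioi le_rfl) measurableSet_Ioi hint1 hint2]
  rw [setIntegral_congr_fun measurableSet_Ioi hzero]
  simp only [integral_zero, add_zero]
  have key : ∀ t ∈ Set.Ioc (0:ℝ) 1, t^(n-1) * max (1 - t ^ (2*s)) 0
      = t ^ ((n:ℝ)-1) - t ^ ((n:ℝ)-1+2*s) := by
    intro t ht
    have ht0 : 0 < t := ht.1
    have h1 : t ^ (2*s) ≤ 1 := Real.rpow_le_one ht0.le ht.2 h2s.le
    rw [max_eq_left (by linarith)]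
    have hnp : t ^ (n-1) = t ^ ((n:ℝ)-1) := by
      rw [← Real.rpow_natCast t (n-1)]
      congr 1
      push_cast [Nat.cast_sub hn]
      ring
    rw [hnp, mul_sub, mul_one, ← Real.rpow_add ht0]
  rw [setIntegral_congr_fun measurableSet_Ioc key]
  rw [← intervalIntegral.integral_of_le zero_le_one]
  have ha : (-1:ℝ) < (n:ℝ)-1 := by
    have : (1:ℝ) ≤ n := by exact_mod_cast hn
    linarith
  have hb : (-1:ℝ) < (n:ℝ)-1+2*s := by linarith
  rw [intervalIntegral.integral_sub (intervalIntegral.intervalIntegrable_rpow' ha) (intervalIntegral.intervalIntegrable_rpow' hb)]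
  rw [integral_rpow (Or.inl ha), integral_rpow (Or.inl hb)]
  have hn' : (0:ℝ) < n := by exact_mod_cast hn
  have h1 : (n:ℝ)-1+1 = n := by ring
  have h2 : (n:ℝ)-1+2*s+1 = n+2*s := by ring
  rw [h1, h2]
  rw [Real.one_rpow, Real.one_rpow, Real.zero_rpow (by positivity), Real.zero_rpow (by positivity)]
  field_simp
  ring


lemma coeff_tendsto (s : ℝ) (hs0 : 0 < s) (t : ℝ) :
    Tendsto (fun Λ : ℝ => (Real.log (s*Λ) - Real.log (Real.log Λ) + 2*s*Real.log t) / Real.log Λ)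
      atTop (nhds 1) := by
  have hL : Tendsto Real.log atTop atTop := Real.tendsto_log_atTop
  have h1 : Tendsto (fun Λ : ℝ => Real.log (s*Λ) / Real.log Λ) atTop (nhds 1) := by
    have : ∀ᶠ Λ : ℝ in atTop, Real.log (s*Λ) / Real.log Λ = Real.log s / Real.log Λ + 1 := by
      filter_upwards [eventually_gt_atTop 1] with Λ hΛ
      rw [Real.log_mul (ne_of_gt hs0) (by linarith)]
      have : Real.log Λ ≠ 0 := ne_of_gt (Real.log_pos hΛ)
      field_simp
    rw [tendsto_congr' this]
    have := (tendsto_const_nhds (x := Real.log s)).div_atTop hL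
    simpa using this.add tendsto_const_nhds
  have h2 : Tendsto (fun Λ : ℝ => Real.log (Real.log Λ) / Real.log Λ) atTop (nhds 0) := by
    have := (Real.isLittleO_log_id_atTop.comp_tendsto hL).tendsto_div_nhds_zero
    simpa [Function.comp] using this
  have h3 : Tendsto (fun Λ : ℝ => (2*s*Real.log t) / Real.log Λ) atTop (nhds 0) :=
    (tendsto_const_nhds (x := 2*s*Real.log t)).div_atTop hL
  have := (h1.sub h2).add h3
  simp only [sub_zero, add_zero] at this
  refine this.congr fun Λ => ?_
  ring

lemma key_ineq (s : ℝ) (hs0 : 0 < s) (t : ℝ) (ht : 0 < t) (ht1 : t ≤ 1) :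
    t ^ (2*s) * (2*s*(-Real.log t)) ≤ 1 := by
  have hlt : Real.log t ≤ 0 := Real.log_nonpos ht.le ht1
  set u : ℝ := 2*s*(-Real.log t) with hu
  have hu0 : 0 ≤ u := mul_nonneg (by positivity) (neg_nonneg.2 hlt)
  have ht2 : t ^ (2*s) = Real.exp (-u) := by
    rw [Real.rpow_def_of_pos ht, hu]; ring_nf
  rw [ht2, Real.exp_neg, inv_mul_le_iff₀ (Real.exp_pos u)]
  nlinarith [Real.add_one_le_exp u]

set_option maxHeartbeats 2000000 in
lemma aux_Klim (n : ℕ) (hn : 0 < n) (s : ℝ) (hs0 : 0 < s) :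
    Tendsto (fun Λ : ℝ => ∫ t in Set.Ioi (0:ℝ), t^(n-1) * Gfun s Λ t) atTop
      (nhds (2*s/(n*((n:ℝ)+2*s)))) := by
  have h2s : (0:ℝ) < 2*s := by linarith
  have hval : (∫ t in Set.Ioi (0:ℝ), t^(n-1) * max (1 - t ^ (2*s)) 0)
      = 2*s/(n*((n:ℝ)+2*s)) := aux_Ival n hn s hs0
  rw [← hval]
  set T : ℝ := (2:ℝ) ^ ((2*s)⁻¹) with hT
  have hT1 : (1:ℝ) ≤ T := Real.one_le_rpow one_le_two (by positivity)
  apply tendsto_integral_filter_of_dominated_convergence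
    (bound := (Set.Ioc 0 T).indicator (fun t => 2*t^(n-1)))
  · filter_upwards with Λ
    apply Measurable.aestronglyMeasurable
    unfold Gfun
    measurability
  · have ev1 : ∀ᶠ Λ : ℝ in atTop, 1 ≤ Real.log Λ := Real.tendsto_log_atTop.eventually_ge_atTop 1
    have ev2 : ∀ᶠ Λ : ℝ in atTop,
        1/2 ≤ (Real.log (s*Λ) - Real.log (Real.log Λ)) / Real.log Λ := by
      have hc := coeff_tendsto s hs0 1
      simp only [Real.log_one, mul_zero, add_zero] at hc
      exact hc.eventually_const_le (by norm_num)
    filter_upwards [ev1, ev2] with Λ hL1 hd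
    rw [ae_restrict_iff' measurableSet_Ioi]
    filter_upwards with t ht
    simp only [Set.mem_Ioi] at ht
    have hL0 : (0:ℝ) < Real.log Λ := by linarith
    set L := Real.log Λ with hLdef
    set d := Real.log (s*Λ) - Real.log L with hddef
    have hd2 : L/2 ≤ d := by
      rw [le_div_iff₀ hL0] at hd
      linarith
    have hd0 : 0 < d := by linarith
    have hGnn : 0 ≤ Gfun s Λ t := le_max_right _ _
    have htp : 0 ≤ t^(n-1) := pow_nonneg ht.le _
    rw [Real.norm_eq_abs, abs_of_nonneg (mul_nonneg htp hGnn)]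
    by_cases hcase : t ≤ T
    · rw [Set.indicator_of_mem (Set.mem_Ioc.2 ⟨ht, hcase⟩)]
      have hG2 : Gfun s Λ t ≤ 2 := by
        unfold Gfun
        apply max_le _ (by norm_num)
        have hkey : -(t ^ (2*s) * ((d + 2*s*Real.log t) / L)) ≤ 1 := by
          by_cases hlt : t ≤ 1
          · have h1 := key_ineq s hs0 t ht hlt
            have htsnn : (0:ℝ) ≤ t ^ (2*s) := Real.rpow_nonneg ht.le _
            have hnum : -(t ^ (2*s) * (d + 2*s*Real.log t)) ≤ 1 := by nlinarith
            have hrw : -(t ^ (2*s) * ((d + 2*s*Real.log t) / L)) =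
                (-(t ^ (2*s) * (d + 2*s*Real.log t))) / L := by ring
            rw [hrw, div_le_one hL0]
            linarith
          · push_neg at hlt
            have hlog : 0 ≤ Real.log t := Real.log_nonneg hlt.le
            have htsnn : (0:ℝ) ≤ t ^ (2*s) := Real.rpow_nonneg ht.le _
            have : 0 ≤ t ^ (2*s) * ((d + 2*s*Real.log t) / L) := by positivity
            linarith
        linarith
      calc t^(n-1) * Gfun s Λ t ≤ t^(n-1) * 2 := mul_le_mul_of_nonneg_left hG2 htp
        _ = 2*t^(n-1) := by ring
    · rw [Set.indicator_of_notMem (by simp [Set.mem_Ioc]; intro; linarith [lt_of_not_ge hcase])]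
      push_neg at hcase
      have ht1 : 1 < t := lt_of_le_of_lt hT1 hcase
      have hts : (2:ℝ) ≤ t ^ (2*s) := by
        have : T ^ (2*s) ≤ t ^ (2*s) :=
          Real.rpow_le_rpow (by positivity) hcase.le h2s.le
        rwa [hT, ← Real.rpow_mul (by norm_num), inv_mul_cancel₀ (ne_of_gt h2s),
          Real.rpow_one] at this
      have hlog : 0 ≤ Real.log t := Real.log_nonneg ht1.le
      have hG0 : Gfun s Λ t = 0 := by
        unfold Gfun
        apply max_eq_right
        have h1 : (1:ℝ) ≤ t ^ (2*s) * (d/L) := by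
          have : (1:ℝ) = 2 * (1/2) := by norm_num
          rw [this]
          apply mul_le_mul hts hd (by norm_num) (by linarith)
        have h2 : t ^ (2*s) * (d/L) ≤ t ^ (2*s) * ((d + 2*s*Real.log t) / L) := by
          gcongr
          nlinarith [mul_nonneg hs0.le hlog]
        linarith
      rw [hG0, mul_zero]
  · apply Integrable.restrict
    rw [integrable_indicator_iff measurableSet_Ioc]
    apply (continuous_const.mul (continuous_pow (n-1))).integrableOn_Ioc
  · rw [ae_restrict_iff' measurableSet_Ioi]
    filter_upwards with t ht
    simp only [Set.mem_Ioi] at ht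
    have hc := coeff_tendsto s hs0 t
    have := ((tendsto_const_nhds (x := (1:ℝ))).sub (hc.const_mul (t ^ (2*s)))).max
      (tendsto_const_nhds (x := (0:ℝ)))
    have h2 := this.const_mul (t^(n-1))
    simp only [mul_one] at h2
    exact h2

lemma aux_point_id (n : ℕ) (hn : 0 < n) (s : ℝ) (hs0 : 0 < s) (Λ : ℝ) (hΛ : 1 < Λ) (t : ℝ)
    (ht : 0 < t) :
    ((s*Λ/Real.log Λ) ^ ((2*s)⁻¹) * t)^(n-1)
        * max (Λ - ((s*Λ/Real.log Λ) ^ ((2*s)⁻¹) * t) ^ (2*s)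
            * Real.log (((s*Λ/Real.log Λ) ^ ((2*s)⁻¹) * t)^2)) 0
      = ((s*Λ/Real.log Λ) ^ ((2*s)⁻¹))^(n-1) * Λ * (t^(n-1) * Gfun s Λ t) := by
  have hL0 : 0 < Real.log Λ := Real.log_pos hΛ
  have hΛ0 : 0 < Λ := by linarith
  have hsΛ : 0 < s*Λ := by positivity
  have hq : 0 < s*Λ/Real.log Λ := by positivity
  set L := Real.log Λ with hLdef
  set ρ : ℝ := (s*Λ/L) ^ ((2*s)⁻¹) with hρdef
  have hρ : 0 < ρ := Real.rpow_pos_of_pos hq _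
  have h2s : (0:ℝ) < 2*s := by linarith
  have hmulpow : (ρ*t)^(n-1) = ρ^(n-1) * t^(n-1) := mul_pow ρ t (n-1)
  have hrpow : (ρ*t) ^ (2*s) = (s*Λ/L) * t ^ (2*s) := by
    rw [Real.mul_rpow hρ.le ht.le, hρdef, ← Real.rpow_mul hq.le,
      inv_mul_cancel₀ (ne_of_gt h2s), Real.rpow_one]
  have hlogρ : Real.log ρ = (2*s)⁻¹ * (Real.log (s*Λ) - Real.log L) := by
    rw [hρdef, Real.log_rpow hq, Real.log_div (ne_of_gt hsΛ) (ne_of_gt hL0)]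
  have hlog2 : Real.log ((ρ*t)^2) = 2 * (Real.log ρ + Real.log t) := by
    rw [Real.log_pow, Real.log_mul (ne_of_gt hρ) (ne_of_gt ht)]
    push_cast; ring
  rw [hmulpow, hrpow, hlog2, hlogρ]
  have hG : Λ - s*Λ/L * t ^ (2*s) * (2 * ((2*s)⁻¹ * (Real.log (s*Λ) - Real.log L) + Real.log t))
      = Λ * (1 - t ^ (2*s) * ((Real.log (s*Λ) - Real.log L + 2*s*Real.log t) / L)) := by
    field_simp
  rw [hG]
  have hmax : max (Λ * (1 - t ^ (2*s) * ((Real.log (s*Λ) - Real.log L + 2*s*Real.log t) / L))) 0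
      = Λ * Gfun s Λ t := by
    unfold Gfun
    rw [← hLdef, mul_max_of_nonneg _ _ hΛ0.le, mul_zero]
  rw [hmax]
  ring

theorem stmt_19 (n : ℕ) (hn : 0 < n) (s : ℝ) (hs : s ∈ Set.Ioo (0:ℝ) 1) (hns : 2*s < n) :
    Filter.Tendsto
      (fun Λ : ℝ =>
        (∫ ξ : EuclideanSpace ℝ (Fin n), max (Λ - ‖ξ‖ ^ (2*s) * Real.log (‖ξ‖^2)) 0) /
          ((2 * sphereArea n / ((n:ℝ)*((n:ℝ) + 2*s))) * (s*Λ) ^ (1 + (n:ℝ)/(2*s)) *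
            (Real.log Λ) ^ (-((n:ℝ)/(2*s)))))
      Filter.atTop (nhds 1) := by
  obtain ⟨hs0, hs1⟩ := hs
  have Klim := aux_Klim n hn s hs0
  have point_id := fun (Λ : ℝ) (hΛ : 1 < Λ) (t : ℝ) (ht : 0 < t) =>
    aux_point_id n hn s hs0 Λ hΛ t ht
  have h2s : (0:ℝ) < 2*s := by linarith
  have hn' : (0:ℝ) < n := by exact_mod_cast hn
  have hn2s : (0:ℝ) < (n:ℝ) + 2*s := by linarith
  haveI : Nonempty (Fin n) := Fin.pos_iff_nonempty.mp hn
  have hA : 0 < sphereArea n := by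
    rw [sphereArea]
    apply mul_pos hn'
    apply ENNReal.toReal_pos
    · exact (Metric.measure_ball_pos volume _ one_pos).ne'
    · exact measure_ball_lt_top.ne
  set K : ℝ → ℝ := fun Λ => ∫ t in Set.Ioi (0:ℝ), t^(n-1) * Gfun s Λ t with hK
  have hrad : ∀ Λ : ℝ, (∫ ξ : EuclideanSpace ℝ (Fin n), max (Λ - ‖ξ‖ ^ (2*s) * Real.log (‖ξ‖^2)) 0)
      = sphereArea n * ∫ y in Set.Ioi (0:ℝ), y^(n-1) * max (Λ - y ^ (2*s) * Real.log (y^2)) 0 := by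
    intro Λ
    have h := integral_fun_norm_addHaar (volume : Measure (EuclideanSpace ℝ (Fin n)))
      (fun r : ℝ => max (Λ - r ^ (2*s) * Real.log (r^2)) 0)
    simp only [finrank_euclideanSpace_fin, nsmul_eq_mul, smul_eq_mul] at h
    rw [h, sphereArea, mul_assoc]
    rfl
  have hev : ∀ᶠ Λ : ℝ in atTop,
      (∫ ξ : EuclideanSpace ℝ (Fin n), max (Λ - ‖ξ‖ ^ (2*s) * Real.log (‖ξ‖^2)) 0) /
          ((2 * sphereArea n / ((n:ℝ)*((n:ℝ) + 2*s))) * (s*Λ) ^ (1 + (n:ℝ)/(2*s)) *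
            (Real.log Λ) ^ (-((n:ℝ)/(2*s))))
        = ((n:ℝ)*((n:ℝ)+2*s)/(2*s)) * K Λ := by
    filter_upwards [eventually_gt_atTop 1] with Λ hΛ
    have hL0 : 0 < Real.log Λ := Real.log_pos hΛ
    have hΛ0 : 0 < Λ := by linarith
    have hsΛ : 0 < s*Λ := by positivity
    have hq : 0 < s*Λ/Real.log Λ := by positivity
    set L := Real.log Λ with hLdef
    set ρ : ℝ := (s*Λ/L) ^ ((2*s)⁻¹) with hρdef
    have hρ : 0 < ρ := Real.rpow_pos_of_pos hq _
    have hρn : ρ^n = ρ * ρ^(n-1) := by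
      rw [← pow_succ' ρ (n-1), Nat.sub_add_cancel hn]
    have hJ : (∫ y in Set.Ioi (0:ℝ), y^(n-1) * max (Λ - y ^ (2*s) * Real.log (y^2)) 0)
        = ρ^n * (Λ * K Λ) := by
      have hcomp := integral_comp_mul_left_Ioi
        (fun y => y^(n-1) * max (Λ - y ^ (2*s) * Real.log (y^2)) 0) 0 hρ
      simp only [mul_zero, smul_eq_mul] at hcomp
      rw [setIntegral_congr_fun measurableSet_Ioi
        (fun t ht => point_id Λ hΛ t ht)] at hcomp
      rw [integral_const_mul] at hcomp
      rw [eq_inv_mul_iff_mul_eq₀ (ne_of_gt hρ)] at hcomp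
      rw [← hcomp, hρn, hK]
      ring
    have hρnval : ρ^n * Λ
        = s⁻¹ * ((s*Λ) ^ (1 + (n:ℝ)/(2*s)) * L ^ (-((n:ℝ)/(2*s)))) := by
      have h1 : ρ^n = (s*Λ) ^ ((n:ℝ)/(2*s)) * L ^ (-((n:ℝ)/(2*s))) := by
        rw [hρdef, ← Real.rpow_natCast ((s*Λ/L) ^ ((2*s)⁻¹)) n, ← Real.rpow_mul hq.le]
        rw [show (2*s)⁻¹ * (n:ℝ) = (n:ℝ)/(2*s) by rw [inv_mul_eq_div]]
        rw [Real.div_rpow hsΛ.le hL0.le, Real.rpow_neg hL0.le, div_eq_mul_inv]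
      have h2 : (s*Λ) ^ (1 + (n:ℝ)/(2*s)) = (s*Λ) * (s*Λ) ^ ((n:ℝ)/(2*s)) := by
        rw [Real.rpow_add hsΛ, Real.rpow_one]
      rw [h1, h2]
      field_simp
    rw [hrad Λ, hJ]
    have hP : 0 < (s*Λ) ^ (1 + (n:ℝ)/(2*s)) := Real.rpow_pos_of_pos hsΛ _
    have hQ : 0 < L ^ (-((n:ℝ)/(2*s))) := Real.rpow_pos_of_pos hL0 _
    rw [show ρ^n * (Λ * K Λ) = (ρ^n * Λ) * K Λ by ring, hρnval]
    field_simp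
  have hone : ((n:ℝ)*((n:ℝ)+2*s)/(2*s)) * (2*s/((n:ℝ)*((n:ℝ)+2*s))) = 1 := by
    field_simp
  have hfin : Filter.Tendsto (fun Λ : ℝ => ((n:ℝ)*((n:ℝ)+2*s)/(2*s)) * K Λ) atTop (nhds 1) := by
    have h := Klim.const_mul ((n:ℝ)*((n:ℝ)+2*s)/(2*s))
    rwa [hone] at h
  exact hfin.congr' (hev.mono fun Λ h => h.symm)
end
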